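/- arXiv:2006.09576 — 4 statements merged into one kernel-verified Lean document; each statement's English description precedes it below -/
import Mathlib

section
/- Let X be a compact Priestley space and let φ : X → X be a homeomorphism that is involutive (φ(φ(x)) = x for all x) and order-reversing (x ≤ y implies φ(y) ≤ φ(x)). Assume X is φ-connected, i.e. the only nonempty subset of X that is simultaneously an upper set, a lower set, and φ-invariant is X itself. If Y ⊆ X is nonempty, closed, φ-invariant (φ(y) ∈ Y for all y ∈ Y), and satisfies Max(X) ∩ ↑Y ⊆ Y (every maximal element lying above some element of Y belongs to Y), then Max(X) ∪ Min(X) ⊆ Y. -/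
open Set

-- Ici is closed in a Priestley space
lemma priestley_isClosed_Ici {X : Type*} [TopologicalSpace X] [PartialOrder X]
    [PriestleySpace X] (y : X) : IsClosed (Ici y) := by
  rw [← isOpen_compl_iff]
  rw [isOpen_iff_forall_mem_open]
  intro z hz
  obtain ⟨U, hU, hUup, hyU, hzU⟩ := exists_isClopen_upper_of_not_le (by exact hz)
  exact ⟨Uᶜ, fun w hw hle => hw (hUup hle hyU), hU.compl.isOpen, hzU⟩

lemma priestley_exists_max {X : Type*} [TopologicalSpace X] [PartialOrder X]
    [PriestleySpace X] [CompactSpace X] (x : X) : ∃ m, x ≤ m ∧ IsMax m := by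
  apply zorn_le_nonempty_Ici₀ x ?_ x le_rfl
  intro c hc hchain y hy
  have : Nonempty c := ⟨⟨y, hy⟩⟩
  have hne : (⋂ z : c, Ici (z : X)).Nonempty := by
    apply IsCompact.nonempty_iInter_of_directed_nonempty_isCompact_isClosed
    · rintro ⟨a, ha⟩ ⟨b, hb⟩
      rcases hchain.total ha hb with h | h
      · exact ⟨⟨b, hb⟩, fun _ hw => le_trans h hw, le_refl _⟩
      · exact ⟨⟨a, ha⟩, le_refl _, fun _ hw => le_trans h hw⟩
    · exact fun z => ⟨z, le_rfl⟩
    · exact fun z => (priestley_isClosed_Ici _).isCompact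
    · exact fun z => priestley_isClosed_Ici _
  obtain ⟨ub, hub⟩ := hne
  exact ⟨ub, fun z hz => mem_iInter.1 hub ⟨z, hz⟩⟩

theorem csubset_contains_max_and_min {X : Type*} [TopologicalSpace X] [PartialOrder X]
    [PriestleySpace X] [CompactSpace X] (φ : X ≃ₜ X)
    (hinv : ∀ x, φ (φ x) = x) (hrev : ∀ x y : X, x ≤ y → φ y ≤ φ x)
    (hconn : ∀ S : Set X, S.Nonempty → IsUpperSet S → IsLowerSet S →
      (∀ x ∈ S, φ x ∈ S) → S = Set.univ)
    (Y : Set X) (hYne : Y.Nonempty) (hYcl : IsClosed Y)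
    (hYinv : ∀ y ∈ Y, φ y ∈ Y)
    (hYmax : {x : X | IsMax x} ∩ {x : X | ∃ y ∈ Y, y ≤ x} ⊆ Y) :
    {x : X | IsMax x} ∪ {x : X | IsMin x} ⊆ Y := by
  -- every point has a minimal element below it
  have hmin : ∀ x : X, ∃ n, n ≤ x ∧ IsMin n := by
    intro x
    obtain ⟨m, hm, hmax⟩ := priestley_exists_max (φ x)
    refine ⟨φ m, ?_, ?_⟩
    · have := hrev _ _ hm
      rwa [hinv] at this
    · intro z hz
      have h1 : m ≤ φ z := by
        have := hrev _ _ hz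
        rwa [hinv] at this
      have h2 : φ z ≤ m := hmax h1
      have := hrev _ _ h2
      rwa [hinv] at this
  -- minimal elements below Y are in Y
  have hYmin : ∀ n : X, IsMin n → (∃ y ∈ Y, n ≤ y) → n ∈ Y := by
    rintro n hn ⟨y, hy, hny⟩
    have hφn : IsMax (φ n) := by
      intro z hz
      have h1 : φ z ≤ φ (φ n) := hrev _ _ hz
      rw [hinv] at h1
      have h2 : n ≤ φ z := hn h1
      have := hrev _ _ h2
      rwa [hinv] at this
    have : φ n ∈ Y := hYmax ⟨hφn, φ y, hYinv y hy, hrev _ _ hny⟩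
    have := hYinv _ this
    rwa [hinv] at this
  -- the up-down closure of Y
  set S : Set X := {x | (∃ y ∈ Y, y ≤ x) ∨ (∃ y ∈ Y, x ≤ y)} with hS
  have hSuniv : S = Set.univ := by
    apply hconn
    · obtain ⟨y, hy⟩ := hYne
      exact ⟨y, Or.inl ⟨y, hy, le_rfl⟩⟩
    · rintro x z hxz (⟨y, hy, hyx⟩ | ⟨y, hy, hxy⟩)
      · exact Or.inl ⟨y, hy, hyx.trans hxz⟩
      · obtain ⟨n, hnx, hn⟩ := hmin x
        have hnY : n ∈ Y := hYmin n hn ⟨y, hy, hnx.trans hxy⟩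
        exact Or.inl ⟨n, hnY, hnx.trans hxz⟩
    · rintro x w hwx (⟨y, hy, hyx⟩ | ⟨y, hy, hxy⟩)
      · obtain ⟨m, hxm, hm⟩ := priestley_exists_max x
        have hmY : m ∈ Y := hYmax ⟨hm, y, hy, hyx.trans hxm⟩
        exact Or.inr ⟨m, hmY, hwx.trans hxm⟩
      · exact Or.inr ⟨y, hy, hwx.trans hxy⟩
    · rintro x (⟨y, hy, hyx⟩ | ⟨y, hy, hxy⟩)
      · exact Or.inr ⟨φ y, hYinv y hy, hrev _ _ hyx⟩
      · exact Or.inl ⟨φ y, hYinv y hy, hrev _ _ hxy⟩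
  rintro x (hx | hx)
  · have : x ∈ S := hSuniv ▸ Set.mem_univ x
    rcases this with ⟨y, hy, hyx⟩ | ⟨y, hy, hxy⟩
    · exact hYmax ⟨hx, y, hy, hyx⟩
    · exact hYmax ⟨hx, y, hy, hx hxy⟩
  · have : x ∈ S := hSuniv ▸ Set.mem_univ x
    rcases this with ⟨y, hy, hyx⟩ | ⟨y, hy, hxy⟩
    · exact hYmin x hx ⟨y, hy, hx hyx⟩
    · exact hYmin x hx ⟨y, hy, hxy⟩
end

section
/- Let L be a pm-algebra with 0 ≠ 1 whose prime filter space is φ-connected. Then L is simple if and only if every prime filter of L is maximal or minimal (with respect to inclusion among prime filters). -/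
/-- A pseudocomplemented De Morgan algebra (pm-algebra): a bounded distributive
lattice with a De Morgan involution `dm` and a pseudocomplement `pc`. -/
class PMAlgebra (L : Type*) extends DistribLattice L, BoundedOrder L where
  dm : L → L
  pc : L → L
  dm_dm : ∀ a : L, dm (dm a) = a
  dm_inf : ∀ a b : L, dm (a ⊓ b) = dm a ⊔ dm b
  pc_iff : ∀ a b : L, a ⊓ b = ⊥ ↔ b ≤ pc a

namespace PMAlgebra

variable {L : Type*} [PMAlgebra L]

/-- A congruence of a pm-algebra. -/
def IsCongruence (θ : L → L → Prop) : Prop :=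
  Equivalence θ ∧
  (∀ a b c d : L, θ a b → θ c d → θ (a ⊓ c) (b ⊓ d)) ∧
  (∀ a b c d : L, θ a b → θ c d → θ (a ⊔ c) (b ⊔ d)) ∧
  (∀ a b : L, θ a b → θ (dm a) (dm b)) ∧
  (∀ a b : L, θ a b → θ (pc a) (pc b))

/-- `L` is simple: it has more than one element and its only congruences are
equality and the total relation. -/
def Simple (L : Type*) [PMAlgebra L] : Prop :=
  Nontrivial L ∧ ∀ θ : L → L → Prop, IsCongruence θ →
    θ = (fun a b => a = b) ∨ θ = (fun _ _ => True)

/-- `L` is subdirectly irreducible: there is a congruence `μ ≠ Eq` contained in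
every congruence different from equality. -/
def SubdirectlyIrreducible (L : Type*) [PMAlgebra L] : Prop :=
  ∃ μ : L → L → Prop, IsCongruence μ ∧ μ ≠ (fun a b => a = b) ∧
    ∀ θ : L → L → Prop, IsCongruence θ → θ ≠ (fun a b => a = b) →
      ∀ a b : L, μ a b → θ a b

/-- A prime filter of the underlying lattice of `L`. -/
def IsPrimeFilter (P : Set L) : Prop :=
  P.Nonempty ∧ P ≠ Set.univ ∧
  (∀ a b : L, a ∈ P → a ≤ b → b ∈ P) ∧
  (∀ a b : L, a ∈ P → b ∈ P → a ⊓ b ∈ P) ∧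
  (∀ a b : L, a ⊔ b ∈ P → a ∈ P ∨ b ∈ P)

/-- The Birula–Rasiowa transformation. -/
def phi (P : Set L) : Set L := {a : L | dm a ∉ P}

/-- `P` is a maximal prime filter. -/
def IsMaximalPF (P : Set L) : Prop :=
  IsPrimeFilter P ∧ ∀ Q : Set L, IsPrimeFilter Q → P ⊆ Q → Q = P

/-- `P` is a minimal prime filter. -/
def IsMinimalPF (P : Set L) : Prop :=
  IsPrimeFilter P ∧ ∀ Q : Set L, IsPrimeFilter Q → Q ⊆ P → Q = P

/-- The body of `L`: prime filters that are neither maximal nor minimal. -/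
def body (L : Type*) [PMAlgebra L] : Set (Set L) :=
  {P : Set L | IsPrimeFilter P ∧ ¬ IsMaximalPF P ∧ ¬ IsMinimalPF P}

/-- The prime filter space of `L` is φ-connected. -/
def PhiConnected (L : Type*) [PMAlgebra L] : Prop :=
  ∀ S : Set (Set L), S ⊆ {P : Set L | IsPrimeFilter P} → S.Nonempty →
    (∀ P Q : Set L, P ∈ S → IsPrimeFilter Q → P ⊆ Q → Q ∈ S) →
    (∀ P Q : Set L, P ∈ S → IsPrimeFilter Q → Q ⊆ P → Q ∈ S) →
    (∀ P : Set L, P ∈ S → phi P ∈ S) →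
    S = {P : Set L | IsPrimeFilter P}

/-- The Kleene identity. -/
def Kleene (L : Type*) [PMAlgebra L] : Prop :=
  ∀ a b : L, a ⊓ dm a ≤ b ⊔ dm b

/-- The term `C(x) = (x ∧ x') ∨ (x ∧ x')*`. -/
def C (x : L) : L := (x ⊓ dm x) ⊔ pc (x ⊓ dm x)

/-- The term `T(x) = C(x) ∧ C(x)'`. -/
def T (x : L) : L := C x ⊓ dm (C x)

end PMAlgebra

namespace PMAlgebra

variable {L : Type*} [PMAlgebra L]

-- basic pc / dm facts
lemma pc_inf_self (a : L) : a ⊓ pc a = ⊥ := (pc_iff a (pc a)).mpr le_rfl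

lemma pc_bot : pc (⊥ : L) = ⊤ :=
  le_antisymm le_top ((pc_iff (⊥ : L) ⊤).mp (by simp))

lemma dm_le_dm {a b : L} (h : a ≤ b) : dm b ≤ dm a := by
  have h2 : dm (a ⊓ b) = dm a ⊔ dm b := dm_inf a b
  rw [inf_eq_left.mpr h] at h2
  exact le_sup_right.trans h2.ge

lemma dm_sup (a b : L) : dm (a ⊔ b) = dm a ⊓ dm b := by
  have h := dm_inf (dm a) (dm b)
  rw [dm_dm, dm_dm] at h
  rw [← h, dm_dm]

-- prime filter basics
lemma IsPrimeFilter.mem_of_le {P : Set L} (hP : IsPrimeFilter P) {a b : L}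
    (ha : a ∈ P) (h : a ≤ b) : b ∈ P := hP.2.2.1 a b ha h

lemma IsPrimeFilter.inf_mem {P : Set L} (hP : IsPrimeFilter P) {a b : L}
    (ha : a ∈ P) (hb : b ∈ P) : a ⊓ b ∈ P := hP.2.2.2.1 a b ha hb

lemma IsPrimeFilter.top_mem {P : Set L} (hP : IsPrimeFilter P) : (⊤ : L) ∈ P := by
  obtain ⟨a, ha⟩ := hP.1
  exact hP.mem_of_le ha le_top

lemma IsPrimeFilter.bot_notMem {P : Set L} (hP : IsPrimeFilter P) : (⊥ : L) ∉ P := by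
  intro hb
  exact hP.2.1 (Set.eq_univ_of_forall fun x => hP.mem_of_le hb bot_le)

lemma IsPrimeFilter.inf_mem_iff {P : Set L} (hP : IsPrimeFilter P) (a b : L) :
    a ⊓ b ∈ P ↔ a ∈ P ∧ b ∈ P :=
  ⟨fun h => ⟨hP.mem_of_le h inf_le_left, hP.mem_of_le h inf_le_right⟩,
   fun h => hP.inf_mem h.1 h.2⟩

lemma IsPrimeFilter.sup_mem_iff {P : Set L} (hP : IsPrimeFilter P) (a b : L) :
    a ⊔ b ∈ P ↔ a ∈ P ∨ b ∈ P :=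
  ⟨hP.2.2.2.2 a b, fun h => h.elim (fun h' => hP.mem_of_le h' le_sup_left)
    (fun h' => hP.mem_of_le h' le_sup_right)⟩

-- phi basics
lemma phi_phi (P : Set L) : phi (phi P) = P := by
  ext a
  simp [phi, dm_dm, not_not]

lemma phi_antitone {P Q : Set L} (h : P ⊆ Q) : phi Q ⊆ phi P :=
  fun _ ha hm => ha (h hm)

lemma phi_prime {P : Set L} (hP : IsPrimeFilter P) : IsPrimeFilter (phi P) := by
  obtain ⟨hne, hnuniv, hup, hinf, hprime⟩ := hP
  refine ⟨?_, ?_, ?_, ?_, ?_⟩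
  · obtain ⟨z, hz⟩ := Set.ne_univ_iff_exists_notMem P |>.mp hnuniv
    exact ⟨dm z, by simp [phi, dm_dm, hz]⟩
  · obtain ⟨z, hz⟩ := hne
    intro h
    have : dm z ∈ phi P := h ▸ Set.mem_univ _
    exact this (by simpa [dm_dm] using hz)
  · intro a b ha hab hmem
    exact ha (hup _ _ hmem (dm_le_dm hab))
  · intro a b ha hb hmem
    rw [dm_inf] at hmem
    rcases hprime _ _ hmem with h | h
    · exact ha h
    · exact hb h
  · intro a b hab
    simp only [phi, Set.mem_setOf_eq, dm_sup] at hab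
    by_contra h
    push_neg at h
    obtain ⟨ha, hb⟩ := h
    simp only [phi, Set.mem_setOf_eq, not_not] at ha hb
    exact hab (hinf _ _ ha hb)

lemma IsMaximalPF.phi_min {Q : Set L} (h : IsMaximalPF Q) : IsMinimalPF (phi Q) := by
  refine ⟨phi_prime h.1, fun N hN hsub => ?_⟩
  have h1 : phi (phi Q) ⊆ phi N := phi_antitone hsub
  rw [phi_phi] at h1
  have h2 : phi N = Q := h.2 (phi N) (phi_prime hN) h1
  have := congrArg phi h2
  rwa [phi_phi] at this

lemma IsMinimalPF.phi_max {Q : Set L} (h : IsMinimalPF Q) : IsMaximalPF (phi Q) := by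
  refine ⟨phi_prime h.1, fun R hR hsub => ?_⟩
  have h1 : phi R ⊆ phi (phi Q) := phi_antitone hsub
  rw [phi_phi] at h1
  have h2 : phi R = Q := h.2 (phi R) (phi_prime hR) h1
  have := congrArg phi h2
  rwa [phi_phi] at this


def IsFilt (F : Set L) : Prop :=
  F.Nonempty ∧ (∀ a b : L, a ∈ F → a ≤ b → b ∈ F) ∧ (∀ a b : L, a ∈ F → b ∈ F → a ⊓ b ∈ F)

def Satur (θ : L → L → Prop) (S : Set L) : Prop :=
  ∀ a b : L, θ a b → a ∈ S → b ∈ S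

lemma sat_prime_sep (θ : L → L → Prop) (hθe : Equivalence θ)
    (hθinf : ∀ a b c d : L, θ a b → θ c d → θ (a ⊓ c) (b ⊓ d))
    (hθsup : ∀ a b c d : L, θ a b → θ c d → θ (a ⊔ c) (b ⊔ d))
    (F I : Set L) (hF : IsFilt F)
    (hIdown : ∀ a b : L, a ∈ I → b ≤ a → b ∈ I)
    (hIsup : ∀ a b : L, a ∈ I → b ∈ I → a ⊔ b ∈ I)
    (hIbot : (⊥ : L) ∈ I)
    (hFsat : Satur θ F) (hIsat : Satur θ I)
    (hdisj : ∀ x : L, x ∈ F → x ∉ I) :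
    ∃ P : Set L, IsPrimeFilter P ∧ F ⊆ P ∧ (∀ x ∈ P, x ∉ I) ∧ Satur θ P := by
  classical
  set S : Set (Set L) :=
    {G | IsFilt G ∧ Satur θ G ∧ F ⊆ G ∧ ∀ x ∈ G, x ∉ I} with hS
  have hzorn := zorn_subset_nonempty S ?_ F ⟨hF, hFsat, subset_rfl, hdisj⟩
  · obtain ⟨m, hFm, hm⟩ := hzorn
    obtain ⟨⟨hmne, hmup, hminf⟩, hmsat, hFsub, hmdisj⟩ := hm.1
    -- m is proper
    have hbot : (⊥ : L) ∉ m := fun h => hmdisj ⊥ h hIbot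
    -- the saturated filter generated by m and an element x
    set Ext : L → Set L := fun x => {z | ∃ w : L, θ z w ∧ ∃ f ∈ m, f ⊓ x ≤ w} with hExt
    have hExtFilt : ∀ x : L, IsFilt (Ext x) := by
      intro x
      obtain ⟨f0, hf0⟩ := hmne
      refine ⟨⟨x, x, hθe.refl x, f0, hf0, inf_le_right⟩, ?_, ?_⟩
      · rintro a b ⟨w, hw, f, hf, hfw⟩ hab
        exact ⟨w ⊔ b, by simpa [sup_eq_right.mpr hab] using hθsup a w b b hw (hθe.refl b),
          f, hf, hfw.trans le_sup_left⟩
      · rintro a b ⟨w1, hw1, f1, hf1, hfw1⟩ ⟨w2, hw2, f2, hf2, hfw2⟩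
        refine ⟨w1 ⊓ w2, hθinf a w1 b w2 hw1 hw2, f1 ⊓ f2, hminf _ _ hf1 hf2, ?_⟩
        exact le_inf ((inf_le_inf_right x inf_le_left).trans hfw1)
          ((inf_le_inf_right x inf_le_right).trans hfw2)
    have hExtSat : ∀ x : L, Satur θ (Ext x) := by
      rintro x a b hab ⟨w, hw, f, hf, hfw⟩
      exact ⟨w, hθe.trans (hθe.symm hab) hw, f, hf, hfw⟩
    have hmExt : ∀ x : L, m ⊆ Ext x := by
      intro x g hg
      exact ⟨g, hθe.refl g, g, hg, inf_le_left⟩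
    have hxExt : ∀ x : L, x ∈ Ext x := by
      intro x
      obtain ⟨f0, hf0⟩ := hmne
      exact ⟨x, hθe.refl x, f0, hf0, inf_le_right⟩
    -- primality
    have hprime : ∀ a b : L, a ⊔ b ∈ m → a ∈ m ∨ b ∈ m := by
      intro a b hab
      by_contra h
      push_neg at h
      obtain ⟨ha, hb⟩ := h
      -- Ext a is not in S, so it meets I
      have hmeet : ∀ x : L, x ∉ m → ∃ z ∈ I, z ∈ Ext x := by
        intro x hx
        by_contra hno
        push_neg at hno
        have hmem : Ext x ∈ S := ⟨hExtFilt x, hExtSat x, hFsub.trans (hmExt x),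
          fun z hz hzI => hno z hzI hz⟩
        have : Ext x ⊆ m := hm.2 hmem (hmExt x)
        exact hx (this (hxExt x))
      obtain ⟨za, hzaI, wa, hwa, fa, hfa, hfwa⟩ := hmeet a ha
      obtain ⟨zb, hzbI, wb, hwb, fb, hfb, hfwb⟩ := hmeet b hb
      set g : L := (fa ⊓ fb) ⊓ (a ⊔ b) with hg
      have hgm : g ∈ m := hminf _ _ (hminf _ _ hfa hfb) hab
      have hgle : g ≤ wa ⊔ wb := by
        rw [hg, inf_sup_left]
        exact sup_le_sup ((inf_le_inf_right a inf_le_left).trans hfwa)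
          ((inf_le_inf_right b inf_le_right).trans hfwb)
      have hzw : θ (za ⊔ zb) (wa ⊔ wb) := hθsup za wa zb wb hwa hwb
      have h1 : θ ((za ⊔ zb) ⊔ g) ((wa ⊔ wb) ⊔ g) := hθsup _ _ _ _ hzw (hθe.refl g)
      have h2 : (wa ⊔ wb) ⊔ g = wa ⊔ wb := sup_eq_left.mpr hgle
      rw [h2] at h1
      have h3 : θ ((za ⊔ zb) ⊔ g) (za ⊔ zb) := hθe.trans h1 (hθe.symm hzw)
      have h4 : (za ⊔ zb) ⊔ g ∈ m := hmup _ _ hgm le_sup_right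
      have h5 : za ⊔ zb ∈ m := hmsat _ _ h3 h4
      exact hmdisj _ h5 (hIsup _ _ hzaI hzbI)
    refine ⟨m, ⟨hmne, ?_, hmup, hminf, hprime⟩, hFsub, hmdisj, hmsat⟩
    intro h
    exact hbot (h ▸ Set.mem_univ _)
  · -- chains
    intro c hcS hchain hcne
    refine ⟨⋃₀ c, ?_, fun s hs => Set.subset_sUnion_of_mem hs⟩
    obtain ⟨G0, hG0⟩ := hcne
    obtain ⟨⟨hG0ne, _, _⟩, _, hFG0, _⟩ := hcS hG0
    refine ⟨⟨?_, ?_, ?_⟩, ?_, ?_, ?_⟩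
    · obtain ⟨x, hx⟩ := hG0ne
      exact ⟨x, G0, hG0, hx⟩
    · rintro a b ⟨G, hG, haG⟩ hab
      exact ⟨G, hG, (hcS hG).1.2.1 a b haG hab⟩
    · rintro a b ⟨G1, hG1, ha⟩ ⟨G2, hG2, hb⟩
      rcases eq_or_ne G1 G2 with rfl | hne
      · exact ⟨G1, hG1, (hcS hG1).1.2.2 a b ha hb⟩
      · rcases hchain hG1 hG2 hne with h | h
        · exact ⟨G2, hG2, (hcS hG2).1.2.2 a b (h ha) hb⟩
        · exact ⟨G1, hG1, (hcS hG1).1.2.2 a b ha (h hb)⟩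
    · rintro a b hab ⟨G, hG, haG⟩
      exact ⟨G, hG, (hcS hG).2.1 a b hab haG⟩
    · exact hFG0.trans (Set.subset_sUnion_of_mem hG0)
    · rintro x ⟨G, hG, hxG⟩ hxI
      exact (hcS hG).2.2.2 x hxG hxI

lemma prime_sep (F I : Set L) (hF : IsFilt F)
    (hIdown : ∀ a b : L, a ∈ I → b ≤ a → b ∈ I)
    (hIsup : ∀ a b : L, a ∈ I → b ∈ I → a ⊔ b ∈ I)
    (hIbot : (⊥ : L) ∈ I)
    (hdisj : ∀ x : L, x ∈ F → x ∉ I) :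
    ∃ P : Set L, IsPrimeFilter P ∧ F ⊆ P ∧ ∀ x ∈ P, x ∉ I := by
  obtain ⟨P, h1, h2, h3, _⟩ := sat_prime_sep (fun a b : L => a = b) eq_equivalence
    (by rintro a b c d rfl rfl; rfl) (by rintro a b c d rfl rfl; rfl)
    F I hF hIdown hIsup hIbot (by rintro a b rfl h; exact h) (by rintro a b rfl h; exact h)
    hdisj
  exact ⟨P, h1, h2, h3⟩

lemma exists_prime_superset_with {Q : Set L} (hQ : IsPrimeFilter Q) {x : L}
    (hx : pc x ∉ Q) : ∃ R : Set L, IsPrimeFilter R ∧ Q ⊆ R ∧ x ∈ R := by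
  obtain ⟨q0, hq0⟩ := hQ.1
  have hF : IsFilt {w : L | ∃ q ∈ Q, q ⊓ x ≤ w} := by
    refine ⟨⟨x, q0, hq0, inf_le_right⟩, ?_, ?_⟩
    · rintro a b ⟨q, hq, hqa⟩ hab
      exact ⟨q, hq, hqa.trans hab⟩
    · rintro a b ⟨q1, hq1, hqa⟩ ⟨q2, hq2, hqb⟩
      exact ⟨q1 ⊓ q2, hQ.inf_mem hq1 hq2,
        le_inf ((inf_le_inf_right x inf_le_left).trans hqa)
          ((inf_le_inf_right x inf_le_right).trans hqb)⟩
  have hdis : ∀ w : L, w ∈ {w : L | ∃ q ∈ Q, q ⊓ x ≤ w} → w ∉ {z : L | z ≤ ⊥} := by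
    rintro w ⟨q, hq, hqw⟩ hw
    have hqx : x ⊓ q = ⊥ := by
      rw [inf_comm]
      exact le_bot_iff.mp (hqw.trans hw)
    exact hx (hQ.mem_of_le hq ((pc_iff x q).mp hqx))
  obtain ⟨R, hR, hsub, hdisj⟩ := prime_sep {w : L | ∃ q ∈ Q, q ⊓ x ≤ w} {z : L | z ≤ ⊥}
    hF (fun a b ha hb => hb.trans ha) (fun a b ha hb => sup_le ha hb) le_rfl hdis
  exact ⟨R, hR, fun q hq => hsub ⟨q, hq, inf_le_left⟩, hsub ⟨q0, hq0, inf_le_right⟩⟩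

lemma exists_maximal_prime_above {Q : Set L} (hQ : IsPrimeFilter Q) :
    ∃ M : Set L, IsMaximalPF M ∧ Q ⊆ M := by
  have hzorn := zorn_subset_nonempty {R : Set L | IsPrimeFilter R ∧ Q ⊆ R} ?_ Q
    ⟨hQ, subset_rfl⟩
  · obtain ⟨m, hQm, hm⟩ := hzorn
    refine ⟨m, ⟨hm.1.1, fun R hR hsub => ?_⟩, hQm⟩
    exact Set.Subset.antisymm (hm.2 ⟨hR, hm.1.2.trans hsub⟩ hsub) hsub
  · intro c hcS hchain hcne
    obtain ⟨G0, hG0⟩ := hcne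
    refine ⟨⋃₀ c, ⟨⟨?_, ?_, ?_, ?_, ?_⟩, ?_⟩, fun s hs => Set.subset_sUnion_of_mem hs⟩
    · obtain ⟨z, hz⟩ := (hcS hG0).1.1
      exact ⟨z, G0, hG0, hz⟩
    · intro h
      have hb : (⊥ : L) ∈ ⋃₀ c := h ▸ Set.mem_univ _
      obtain ⟨G, hG, hbG⟩ := hb
      exact (hcS hG).1.bot_notMem hbG
    · rintro a b ⟨G, hG, haG⟩ hab
      exact ⟨G, hG, (hcS hG).1.mem_of_le haG hab⟩
    · rintro a b ⟨G1, hG1, ha⟩ ⟨G2, hG2, hb⟩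
      rcases eq_or_ne G1 G2 with rfl | hne
      · exact ⟨G1, hG1, (hcS hG1).1.inf_mem ha hb⟩
      · rcases hchain hG1 hG2 hne with h | h
        · exact ⟨G2, hG2, (hcS hG2).1.inf_mem (h ha) hb⟩
        · exact ⟨G1, hG1, (hcS hG1).1.inf_mem ha (h hb)⟩
    · rintro a b ⟨G, hG, hab⟩
      rcases (hcS hG).1.2.2.2.2 a b hab with h | h
      · exact Or.inl ⟨G, hG, h⟩
      · exact Or.inr ⟨G, hG, h⟩
    · exact (hcS hG0).2.trans (Set.subset_sUnion_of_mem hG0)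

lemma IsMaximalPF.pc_mem {Q : Set L} (hQ : IsMaximalPF Q) {y : L} (hy : y ∉ Q) :
    pc y ∈ Q := by
  by_contra h
  obtain ⟨R, hR, hsub, hyR⟩ := exists_prime_superset_with hQ.1 h
  rw [hQ.2 R hR hsub] at hyR
  exact hy hyR

lemma pc_mem_prime_iff {Q : Set L} (hQ : IsPrimeFilter Q) (x : L) :
    pc x ∈ Q ↔ ∀ M : Set L, IsMaximalPF M → Q ⊆ M → x ∉ M := by
  constructor
  · intro hpc M hM hQM hx
    have : x ⊓ pc x ∈ M := hM.1.inf_mem hx (hQM hpc)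
    rw [pc_inf_self] at this
    exact hM.1.bot_notMem this
  · intro hall
    by_contra hpc
    obtain ⟨R, hR, hQR, hxR⟩ := exists_prime_superset_with hQ hpc
    obtain ⟨M, hM, hRM⟩ := exists_maximal_prime_above hR
    exact hall M hM (hQR.trans hRM) (hRM hxR)

lemma exists_unmax_witness {P : Set L} (hP : IsPrimeFilter P) (h : ¬ IsMaximalPF P) :
    ∃ a : L, a ∉ P ∧ pc a ∉ P := by
  unfold IsMaximalPF at h
  push_neg at h
  obtain ⟨Q, hQ, hPQ, hne⟩ := h hP
  obtain ⟨a, haQ, haP⟩ := Set.exists_of_ssubset (hPQ.ssubset_of_ne (Ne.symm hne))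
  refine ⟨a, haP, fun hpc => ?_⟩
  have : a ⊓ pc a ∈ Q := hQ.inf_mem haQ (hPQ hpc)
  rw [pc_inf_self] at this
  exact hQ.bot_notMem this

/-- The relation of agreement on all maximal and minimal prime filters. -/
def thetaMM (L : Type*) [PMAlgebra L] : L → L → Prop :=
  fun u v => ∀ Q : Set L, IsPrimeFilter Q → (IsMaximalPF Q ∨ IsMinimalPF Q) →
    (u ∈ Q ↔ v ∈ Q)

lemma thetaMM_cong : IsCongruence (thetaMM L) := by
  refine ⟨⟨fun x Q hQ hmm => Iff.rfl, fun h Q hQ hmm => (h Q hQ hmm).symm,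
    fun h1 h2 Q hQ hmm => (h1 Q hQ hmm).trans (h2 Q hQ hmm)⟩, ?_, ?_, ?_, ?_⟩
  · intro a b c d h1 h2 Q hQ hmm
    rw [hQ.inf_mem_iff, hQ.inf_mem_iff, h1 Q hQ hmm, h2 Q hQ hmm]
  · intro a b c d h1 h2 Q hQ hmm
    rw [hQ.sup_mem_iff, hQ.sup_mem_iff, h1 Q hQ hmm, h2 Q hQ hmm]
  · intro a b h Q hQ hmm
    have hphi := h (phi Q) (phi_prime hQ)
      (hmm.elim (fun m => Or.inr m.phi_min) (fun m => Or.inl m.phi_max))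
    simp only [phi, Set.mem_setOf_eq] at hphi
    exact not_iff_not.mp hphi
  · intro a b h Q hQ hmm
    rw [pc_mem_prime_iff hQ, pc_mem_prime_iff hQ]
    constructor
    · intro hall M hM hQM hmem
      exact hall M hM hQM ((h M hM.1 (Or.inl hM)).mpr hmem)
    · intro hall M hM hQM hmem
      exact hall M hM hQM ((h M hM.1 (Or.inl hM)).mp hmem)

lemma sat_up {θ : L → L → Prop} (hcong : IsCongruence θ)
    (hbody : ∀ P : Set L, IsPrimeFilter P → IsMaximalPF P ∨ IsMinimalPF P)
    {P Q : Set L} (hP : IsPrimeFilter P) (hPs : Satur θ P)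
    (hQ : IsPrimeFilter Q) (hPQ : P ⊆ Q) : Satur θ Q := by
  obtain ⟨hθe, hθinf, hθsup, hθdm, hθpc⟩ := hcong
  rcases eq_or_ne P Q with rfl | hne
  · exact hPs
  have hmax : IsMaximalPF Q := by
    rcases hbody Q hQ with h | h
    · exact h
    · exact absurd (h.2 P hP hPQ) hne
  intro x y hxy hx
  by_contra hy
  have hx1 : x ⊔ y ∈ Q := hQ.mem_of_le hx le_sup_left
  have hxy1 : θ (x ⊔ y) y := by
    have := hθsup x y y y hxy (hθe.refl y)
    rwa [sup_idem] at this
  have hpcy : pc y ∈ Q := hmax.pc_mem hy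
  have ht : (x ⊔ y) ⊓ pc y ∈ Q := hQ.inf_mem hx1 hpcy
  have htb : θ ((x ⊔ y) ⊓ pc y) ⊥ := by
    have := hθinf (x ⊔ y) y (pc y) (pc y) hxy1 (hθe.refl (pc y))
    rwa [pc_inf_self] at this
  have htop : θ (pc ((x ⊔ y) ⊓ pc y)) ⊤ := by
    have := hθpc _ _ htb
    rwa [pc_bot] at this
  have hPt : pc ((x ⊔ y) ⊓ pc y) ∈ P := hPs _ _ (hθe.symm htop) hP.top_mem
  have hbotQ : ((x ⊔ y) ⊓ pc y) ⊓ pc ((x ⊔ y) ⊓ pc y) ∈ Q := hQ.inf_mem ht (hPQ hPt)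
  rw [pc_inf_self] at hbotQ
  exact hQ.bot_notMem hbotQ

lemma sat_phi {θ : L → L → Prop} (hcong : IsCongruence θ) {P : Set L}
    (hPs : Satur θ P) : Satur θ (phi P) := by
  intro x y hxy hx hmem
  exact hx (hPs _ _ (hcong.2.2.2.1 y x (hcong.1.symm hxy)) hmem)

end PMAlgebra

open PMAlgebra

/-- A φ-connected nontrivial pm-algebra is simple iff every prime filter is
maximal or minimal. -/
theorem simple_iff_every_prime_filter_max_or_min {L : Type*} [PMAlgebra L]
    (hnt : (⊥ : L) ≠ ⊤) (hconn : PhiConnected L) :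
    Simple L ↔ ∀ P : Set L, IsPrimeFilter P → IsMaximalPF P ∨ IsMinimalPF P := by
  constructor
  · intro hs P hP
    by_contra hno
    push_neg at hno
    obtain ⟨hnmax, hnmin⟩ := hno
    obtain ⟨a, haP, hpaP⟩ := exists_unmax_witness hP hnmax
    have hphinmax : ¬ IsMaximalPF (phi P) := by
      intro hmax
      have := hmax.phi_min
      rw [phi_phi] at this
      exact hnmin this
    obtain ⟨b, hb1, hb2⟩ := exists_unmax_witness (phi_prime hP) hphinmax
    simp only [phi, Set.mem_setOf_eq, not_not] at hb1 hb2
    set c : L := dm b ⊓ dm (pc b) with hc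
    set d : L := a ⊔ pc a with hd
    have hcP : c ∈ P := hP.inf_mem hb1 hb2
    have hdP : d ∉ P := by
      intro hdp
      rcases hP.2.2.2.2 a (pc a) hdp with h | h
      · exact haP h
      · exact hpaP h
    have hkey : thetaMM L (c ⊓ d) c := by
      intro Q hQ hmm
      constructor
      · intro h
        exact hQ.mem_of_le h inf_le_left
      · intro hcQ
        refine hQ.inf_mem hcQ ?_
        by_contra hdQ
        have hnmaxQ : ¬ IsMaximalPF Q := by
          intro hmax
          exact hdQ (hQ.mem_of_le
            (hmax.pc_mem (fun h => hdQ (hQ.mem_of_le h le_sup_left))) le_sup_right)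
        have hminQ : IsMinimalPF Q := hmm.resolve_left hnmaxQ
        have hphimax : IsMaximalPF (phi Q) := hminQ.phi_max
        have hbphi : b ∉ phi Q := fun h => h (hQ.mem_of_le hcQ inf_le_left)
        have hpcb : pc b ∈ phi Q := hphimax.pc_mem hbphi
        exact hpcb (hQ.mem_of_le hcQ inf_le_right)
    have hne : c ⊓ d ≠ c := by
      intro h
      have hle : c ≤ d := by
        rw [← h]
        exact inf_le_right
      exact hdP (hP.mem_of_le hcP hle)
    obtain ⟨M, hM, hPM⟩ := exists_maximal_prime_above hP
    have hnbt : ¬ thetaMM L ⊥ ⊤ := by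
      intro h
      exact hM.1.bot_notMem ((h M hM.1 (Or.inl hM)).mpr hM.1.top_mem)
    rcases hs.2 (thetaMM L) thetaMM_cong with h | h
    · rw [h] at hkey
      exact hne hkey
    · rw [h] at hnbt
      exact hnbt trivial
  · intro hbody
    refine ⟨⟨⊥, ⊤, hnt⟩, ?_⟩
    intro θ hcong
    by_cases htot : θ = fun _ _ => True
    · exact Or.inr htot
    left
    have hnbt : ¬ θ ⊥ ⊤ := by
      intro h
      apply htot
      funext u v
      have hbu : θ ⊥ u := by
        have := hcong.2.1 u u ⊥ ⊤ (hcong.1.refl u) h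
        rwa [inf_bot_eq, inf_top_eq] at this
      have hbv : θ ⊥ v := by
        have := hcong.2.1 v v ⊥ ⊤ (hcong.1.refl v) h
        rwa [inf_bot_eq, inf_top_eq] at this
      exact eq_true (hcong.1.trans (hcong.1.symm hbu) hbv)
    have hFfilt : IsFilt {x : L | θ x ⊤} := by
      refine ⟨⟨⊤, hcong.1.refl ⊤⟩, ?_, ?_⟩
      · intro x y hx hxy
        have := hcong.2.2.1 x ⊤ y y hx (hcong.1.refl y)
        rwa [sup_eq_right.mpr hxy, top_sup_eq] at this
      · intro x y hx hy
        have := hcong.2.1 x ⊤ y ⊤ hx hy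
        rwa [inf_idem] at this
    obtain ⟨P₀, hP₀p, hFP₀, hdisj₀, hP₀s⟩ := sat_prime_sep θ hcong.1 hcong.2.1 hcong.2.2.1
      {x : L | θ x ⊤} {x : L | θ x ⊥} hFfilt
      (by
        intro x y hx hxy
        have := hcong.2.1 y y x ⊥ (hcong.1.refl y) hx
        rwa [inf_eq_left.mpr hxy, inf_bot_eq] at this)
      (by
        intro x y hx hy
        have := hcong.2.2.1 x ⊥ y ⊥ hx hy
        rwa [sup_idem] at this)
      (hcong.1.refl ⊥)
      (fun x y hxy hx => hcong.1.trans (hcong.1.symm hxy) hx)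
      (fun x y hxy hx => hcong.1.trans (hcong.1.symm hxy) hx)
      (fun x hxF hxI => hnbt (hcong.1.symm (hcong.1.trans (hcong.1.symm hxF) hxI)))
    set Y : Set (Set L) := {P | IsPrimeFilter P ∧ Satur θ P} with hY
    have hinv : ∀ P : Set L, P ∈ Y → phi P ∈ Y :=
      fun P hP => ⟨phi_prime hP.1, sat_phi hcong hP.2⟩
    have hinc : ∀ P Q : Set L, P ∈ Y → IsPrimeFilter Q → P ⊆ Q → Q ∈ Y :=
      fun P Q hP hQ hPQ => ⟨hQ, sat_up hcong hbody hP.1 hP.2 hQ hPQ⟩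
    have hdec : ∀ P Q : Set L, P ∈ Y → IsPrimeFilter Q → Q ⊆ P → Q ∈ Y := by
      intro P Q hP hQ hQP
      have h2 : phi Q ∈ Y := hinc (phi P) (phi Q) (hinv P hP) (phi_prime hQ)
        (phi_antitone hQP)
      have h3 : phi (phi Q) ∈ Y := hinv (phi Q) h2
      rwa [phi_phi] at h3
    have hYeq := hconn Y (fun P hP => hP.1) ⟨P₀, hP₀p, hP₀s⟩ hinc hdec hinv
    funext u v
    apply propext
    constructor
    · intro huv
      by_contra hne
      have h2 : ¬ (u ≤ v ∧ v ≤ u) := fun h => hne (le_antisymm h.1 h.2)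
      have hsep : ∀ x y : L, θ x y → ¬ x ≤ y → False := by
        intro x y hxy hnle
        have hF : IsFilt {z : L | x ≤ z} := ⟨⟨x, le_rfl⟩, fun a b ha hab => ha.trans hab,
          fun a b ha hb => le_inf ha hb⟩
        obtain ⟨R, hR, hsub, hdisj⟩ := prime_sep {z : L | x ≤ z} {z : L | z ≤ y} hF
          (fun a b ha hb => hb.trans ha) (fun a b ha hb => sup_le ha hb) bot_le
          (fun w hw hw2 => hnle (hw.trans hw2))
        have hRY : R ∈ Y := by
          rw [hYeq]
          exact hR
        have hvR : y ∈ R := hRY.2 x y hxy (hsub le_rfl)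
        exact hdisj y hvR le_rfl
      rcases not_and_or.mp h2 with h | h
      · exact hsep u v huv h
      · exact hsep v u (hcong.1.symm huv) h
    · rintro rfl
      exact hcong.1.refl u
end

section
/- Let L be a finite pm-algebra with 0 ≠ 1. Then L is subdirectly irreducible if and only if the prime filter space of L is φ-connected and moreover Body(L) has fewer than two elements or Body(L) = {P, φ(P)} for some prime filter P with φ(P) ≠ P. -/
open PMAlgebra

namespace PMAux
open PMAlgebra

variable {L : Type*} [PMAlgebra L]

/-! ### De Morgan and pseudocomplement basics -/

lemma dm_antitone {a b : L} (h : a ≤ b) : dm b ≤ dm a := by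
  have h2 : dm (a ⊓ b) = dm a ⊔ dm b := dm_inf a b
  rw [inf_eq_left.mpr h] at h2
  exact le_sup_right.trans h2.ge

lemma dm_sup (a b : L) : dm (a ⊔ b) = dm a ⊓ dm b := by
  have h := dm_inf (dm a) (dm b)
  rw [dm_dm, dm_dm] at h
  rw [← h, dm_dm]

lemma dm_top : dm (⊤ : L) = ⊥ := by
  have h : ∀ a : L, dm (⊤ : L) ≤ dm a := by
    intro a
    have h2 := dm_inf (⊤ : L) a
    rw [top_inf_eq] at h2
    exact le_sup_left.trans h2.ge
  have h3 := h (dm ⊥)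
  rw [dm_dm] at h3
  exact le_bot_iff.mp h3

lemma dm_bot : dm (⊥ : L) = ⊤ := by rw [← dm_top, dm_dm]

lemma inf_pc (a : L) : a ⊓ pc a = ⊥ := (pc_iff a (pc a)).mpr le_rfl

lemma pc_bot : pc (⊥ : L) = ⊤ := top_le_iff.mp ((pc_iff (⊥:L) ⊤).mp (by simp))

/-! ### Prime filter basics -/

lemma pf_top_mem {P : Set L} (h : IsPrimeFilter P) : (⊤ : L) ∈ P := by
  obtain ⟨⟨a, ha⟩, -, hup, -, -⟩ := h
  exact hup a ⊤ ha le_top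

lemma pf_bot_not_mem {P : Set L} (h : IsPrimeFilter P) : (⊥ : L) ∉ P := by
  obtain ⟨-, hne, hup, -, -⟩ := h
  intro hb
  exact hne (Set.eq_univ_of_forall fun x => hup ⊥ x hb bot_le)

lemma pf_inf_mem_iff {P : Set L} (h : IsPrimeFilter P) {a b : L} :
    a ⊓ b ∈ P ↔ a ∈ P ∧ b ∈ P := by
  obtain ⟨-, -, hup, hinf, -⟩ := h
  exact ⟨fun hi => ⟨hup _ a hi inf_le_left, hup _ b hi inf_le_right⟩,
    fun ⟨ha, hb⟩ => hinf a b ha hb⟩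

lemma pf_sup_mem_iff {P : Set L} (h : IsPrimeFilter P) {a b : L} :
    a ⊔ b ∈ P ↔ a ∈ P ∨ b ∈ P := by
  obtain ⟨-, -, hup, -, hpr⟩ := h
  exact ⟨fun hs => hpr a b hs,
    fun hab => hab.elim (fun ha => hup a _ ha le_sup_left) (fun hb => hup b _ hb le_sup_right)⟩

/-! ### The Birula–Rasiowa transformation -/

lemma phi_phi (P : Set L) : phi (phi P) = P := by
  ext a
  simp [phi, dm_dm, not_not]

lemma phi_isPrimeFilter {P : Set L} (h : IsPrimeFilter P) : IsPrimeFilter (phi P) := by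
  have hbot : (⊥ : L) ∉ phi P := fun hb => hb (by rw [dm_bot]; exact pf_top_mem h)
  refine ⟨⟨⊤, ?_⟩, ?_, ?_, ?_, ?_⟩
  · show dm (⊤ : L) ∉ P
    rw [dm_top]; exact pf_bot_not_mem h
  · intro hU
    exact hbot (by rw [hU]; exact Set.mem_univ _)
  · intro a b ha hab hb
    exact ha (h.2.2.1 (dm b) (dm a) hb (dm_antitone hab))
  · intro a b ha hb hab
    have : dm a ⊔ dm b ∈ P := by rw [← dm_inf]; exact hab
    rcases (pf_sup_mem_iff h).mp this with h' | h'
    · exact ha h'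
    · exact hb h'
  · intro a b hab
    by_contra hc
    push_neg at hc
    obtain ⟨ha, hb⟩ := hc
    have ha' : dm a ∈ P := not_not.mp ha
    have hb' : dm b ∈ P := not_not.mp hb
    exact hab (by show dm (a ⊔ b) ∈ P; rw [dm_sup]; exact (pf_inf_mem_iff h).mpr ⟨ha', hb'⟩)

lemma phi_anti {P Q : Set L} (h : P ⊆ Q) : phi Q ⊆ phi P :=
  fun _ ha hb => ha (h hb)

lemma phi_maximal {P : Set L} (h : IsMinimalPF P) : IsMaximalPF (phi P) := by
  refine ⟨phi_isPrimeFilter h.1, fun Q hQ hsub => ?_⟩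
  have h1 : phi Q ⊆ P := by
    have := phi_anti hsub
    rwa [phi_phi] at this
  have h2 : phi Q = P := h.2 (phi Q) (phi_isPrimeFilter hQ) h1
  rw [← phi_phi Q, h2]

lemma phi_minimal {P : Set L} (h : IsMaximalPF P) : IsMinimalPF (phi P) := by
  refine ⟨phi_isPrimeFilter h.1, fun Q hQ hsub => ?_⟩
  have h1 : P ⊆ phi Q := by
    have := phi_anti hsub
    rwa [phi_phi] at this
  have h2 : phi Q = P := h.2 (phi Q) (phi_isPrimeFilter hQ) h1
  rw [← phi_phi Q, h2]

lemma phi_mem_body {P : Set L} (h : P ∈ body L) : phi P ∈ body L := by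
  obtain ⟨hP, hmax, hmin⟩ := h
  refine ⟨phi_isPrimeFilter hP, ?_, ?_⟩
  · intro hc
    exact hmin (phi_phi P ▸ phi_minimal hc)
  · intro hc
    exact hmax (phi_phi P ▸ phi_maximal hc)

end PMAux

namespace PMAux
open PMAlgebra

set_option linter.unusedSectionVars false

variable {L : Type*} [PMAlgebra L] [Finite L]

/-! ### Finite lattice facts -/

lemma exists_rep {P : Set L} (h : IsPrimeFilter P) :
    ∃ p : L, SupIrred p ∧ P = Set.Ici p := by
  classical
  have hfin : P.Finite := P.toFinite
  have hne : hfin.toFinset.Nonempty := by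
    rw [Set.Finite.toFinset_nonempty]; exact h.1
  set p := hfin.toFinset.inf' hne id with hp
  have hpP : p ∈ P := by
    refine Finset.inf'_mem P (fun x hx y hy => h.2.2.2.1 x y hx hy) _ hne id ?_
    intro i hi
    exact (Set.Finite.mem_toFinset hfin).mp hi
  have hle : ∀ x ∈ P, p ≤ x := fun x hx =>
    Finset.inf'_le id ((Set.Finite.mem_toFinset hfin).mpr hx)
  have hPI : P = Set.Ici p := by
    ext x
    exact ⟨fun hx => hle x hx, fun hx => h.2.2.1 p x hpP hx⟩
  refine ⟨p, ⟨?_, ?_⟩, hPI⟩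
  · intro hmin
    have hpb : p = ⊥ := le_bot_iff.mp (hmin bot_le)
    exact pf_bot_not_mem h (hpb ▸ hpP)
  · intro b c hbc
    have hbcP : b ⊔ c ∈ P := hbc ▸ hpP
    rcases (pf_sup_mem_iff h).mp hbcP with hb | hb
    · exact Or.inl (le_antisymm (le_sup_left.trans hbc.le) (hle b hb))
    · exact Or.inr (le_antisymm (le_sup_right.trans hbc.le) (hle c hb))

lemma isPrimeFilter_Ici {p : L} (hp : SupIrred p) : IsPrimeFilter (Set.Ici p) := by
  have hsp : SupPrime p := hp.supPrime
  refine ⟨⟨p, le_rfl⟩, ?_, fun a b ha hab => le_trans ha hab,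
    fun a b ha hb => le_inf ha hb, fun a b hab => hsp.2 hab⟩
  intro hU
  have hb : (⊥ : L) ∈ Set.Ici p := by rw [hU]; exact Set.mem_univ _
  exact hp.ne_bot (le_bot_iff.mp hb)

lemma le_of_supIrred_le {x y : L} (h : ∀ q : L, SupIrred q → q ≤ y → q ≤ x) : y ≤ x := by
  obtain ⟨s, hs, hirr⟩ := exists_supIrred_decomposition y
  rw [← hs]
  refine Finset.sup_le fun b hb => h b (hirr hb) ?_
  rw [← hs]
  exact Finset.le_sup (f := id) hb

lemma exists_supIrred_le {a : L} (ha : a ≠ ⊥) : ∃ q : L, SupIrred q ∧ q ≤ a := by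
  by_contra h
  push_neg at h
  exact ha (le_bot_iff.mp (le_of_supIrred_le (x := ⊥) fun q hq hqa => absurd hqa (h q hq)))

/-- The join of all elements strictly below `p`. -/
noncomputable def lcov (p : L) : L := (Set.toFinite {x : L | x < p}).toFinset.sup id

lemma le_lcov {x p : L} (h : x < p) : x ≤ lcov p :=
  Finset.le_sup (f := id) ((Set.Finite.mem_toFinset (Set.toFinite {x : L | x < p})).mpr h)

lemma lcov_le {p : L} : lcov p ≤ p :=
  Finset.sup_le fun b hb => (le_of_lt ((Set.Finite.mem_toFinset (Set.toFinite {x : L | x < p})).mp hb))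

lemma lcov_lt {p : L} (hp : SupIrred p) : lcov p < p := by
  rcases lt_or_eq_of_le (lcov_le (p := p)) with h | h
  · exact h
  · exfalso
    obtain ⟨i, hi, hip⟩ := hp.finset_sup_eq h
    have h2 : i < p := (Set.Finite.mem_toFinset (Set.toFinite {x : L | x < p})).mp hi
    have h3 : i = p := hip
    rw [h3] at h2
    exact lt_irrefl p h2

lemma exists_max_above {P : Set L} (hP : IsPrimeFilter P) :
    ∃ M : Set L, IsMaximalPF M ∧ P ⊆ M := by
  obtain ⟨M, hM, hmax⟩ := Set.Finite.exists_maximalFor id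
    {Q : Set L | IsPrimeFilter Q ∧ P ⊆ Q} (Set.toFinite _) ⟨P, hP, subset_rfl⟩
  refine ⟨M, ⟨hM.1, fun Q hQ hMQ => ?_⟩, hM.2⟩
  exact le_antisymm (hmax ⟨hQ, hM.2.trans hMQ⟩ hMQ) hMQ

lemma maximal_pc_mem {M : Set L} (hM : IsMaximalPF M) {a : L} (ha : a ∉ M) : pc a ∈ M := by
  obtain ⟨m, hm, hrep⟩ := exists_rep hM.1
  subst hrep
  have hma : a ⊓ m = ⊥ := by
    by_contra hne
    obtain ⟨q, hq, hqle⟩ := exists_supIrred_le hne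
    have hQ : Set.Ici m ⊆ Set.Ici q := fun x hx => le_trans (hqle.trans inf_le_right) hx
    have heq := hM.2 (Set.Ici q) (isPrimeFilter_Ici hq) hQ
    have haq : a ∈ Set.Ici q := (hqle.trans inf_le_left : q ≤ a)
    rw [heq] at haq
    exact ha haq
  exact (pc_iff a m).mp hma

lemma pc_mem_iff {P : Set L} (hP : IsPrimeFilter P) {a : L} :
    pc a ∈ P ↔ ∀ M : Set L, IsMaximalPF M → P ⊆ M → a ∉ M := by
  constructor
  · intro hpc M hM hPM haM
    exact pf_bot_not_mem hM.1 (inf_pc a ▸ hM.1.2.2.2.1 a (pc a) haM (hPM hpc))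
  · intro h
    obtain ⟨p, hp, hrep⟩ := exists_rep hP
    subst hrep
    by_contra hpc
    have hne : a ⊓ p ≠ ⊥ := fun he => hpc ((pc_iff a p).mp he)
    obtain ⟨q, hq, hqle⟩ := exists_supIrred_le hne
    obtain ⟨M, hM, hsub⟩ := exists_max_above (isPrimeFilter_Ici hq)
    have hPM : Set.Ici p ⊆ M := fun x hx => hsub (le_trans (hqle.trans inf_le_right) hx)
    exact h M hM hPM (hsub (hqle.trans inf_le_left))

lemma exists_separating {a b : L} (hne : a ≠ b) :
    ∃ P : Set L, IsPrimeFilter P ∧ ¬(a ∈ P ↔ b ∈ P) := by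
  have key : ∀ x y : L, ¬ x ≤ y → ∃ P : Set L, IsPrimeFilter P ∧ x ∈ P ∧ y ∉ P := by
    intro x y hxy
    have h2 : ¬ ∀ q : L, SupIrred q → q ≤ x → q ≤ y := fun h => hxy (le_of_supIrred_le h)
    push_neg at h2
    obtain ⟨q, hq, hqx, hqy⟩ := h2
    exact ⟨Set.Ici q, isPrimeFilter_Ici hq, hqx, hqy⟩
  have h1 : ¬ a ≤ b ∨ ¬ b ≤ a := by
    by_contra h
    push_neg at h
    exact hne (le_antisymm h.1 h.2)
  rcases h1 with h | h
  · obtain ⟨P, hP, ha, hb⟩ := key a b h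
    exact ⟨P, hP, fun hiff => hb (hiff.mp ha)⟩
  · obtain ⟨P, hP, hb, ha⟩ := key b a h
    exact ⟨P, hP, fun hiff => ha (hiff.mpr hb)⟩

lemma agree_ne_rep {Q : Set L} (hQ : IsPrimeFilter Q) {p : L} (hp : SupIrred p)
    (hne : Q ≠ Set.Ici p) : (p ∈ Q ↔ lcov p ∈ Q) := by
  obtain ⟨q, hq, hrep⟩ := exists_rep hQ
  subst hrep
  simp only [Set.mem_Ici]
  constructor
  · intro hqp
    refine le_lcov (lt_of_le_of_ne hqp fun h => hne ?_)
    rw [h]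
  · intro h
    exact h.trans lcov_le

end PMAux

namespace PMAux
open PMAlgebra

set_option linter.unusedSectionVars false
set_option linter.unusedVariables false

variable {L : Type*} [PMAlgebra L] [Finite L]

/-- The congruence determined by agreement on a set of prime filters. -/
def theta (A : Set (Set L)) (a b : L) : Prop := ∀ P ∈ A, (a ∈ P ↔ b ∈ P)

lemma theta_isCongruence {A : Set (Set L)} (hA : ∀ P ∈ A, IsPrimeFilter P)
    (hinv : ∀ P ∈ A, phi P ∈ A)
    (hmax : ∀ P ∈ A, ∀ M : Set L, IsMaximalPF M → P ⊆ M → M ∈ A) :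
    IsCongruence (theta A) := by
  refine ⟨⟨fun a P hP => Iff.rfl, fun h P hP => (h P hP).symm,
    fun h1 h2 P hP => (h1 P hP).trans (h2 P hP)⟩, ?_, ?_, ?_, ?_⟩
  · intro a b c d hab hcd P hP
    rw [pf_inf_mem_iff (hA P hP), pf_inf_mem_iff (hA P hP), hab P hP, hcd P hP]
  · intro a b c d hab hcd P hP
    rw [pf_sup_mem_iff (hA P hP), pf_sup_mem_iff (hA P hP), hab P hP, hcd P hP]
  · intro a b hab P hP
    exact not_iff_not.mp (hab (phi P) (hinv P hP))
  · intro a b hab P hP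
    rw [pc_mem_iff (hA P hP), pc_mem_iff (hA P hP)]
    exact forall_congr' fun M => forall_congr' fun hM => forall_congr' fun hPM =>
      not_congr (hab M (hmax P hP M hM hPM))

/-- The set of prime filters on which a congruence "acts as equality". -/
def Sset (θ : L → L → Prop) : Set (Set L) :=
  {P : Set L | IsPrimeFilter P ∧ ∀ a b : L, θ a b → (a ∈ P ↔ b ∈ P)}

lemma Sset_phi {θ : L → L → Prop} (hθ : IsCongruence θ) {P : Set L} (hP : P ∈ Sset θ) :
    phi P ∈ Sset θ :=
  ⟨phi_isPrimeFilter hP.1, fun a b hab => not_congr (hP.2 (dm a) (dm b) (hθ.2.2.2.1 a b hab))⟩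

lemma Sset_max {θ : L → L → Prop} (hθ : IsCongruence θ) {P M : Set L} (hP : P ∈ Sset θ)
    (hM : IsMaximalPF M) (hPM : P ⊆ M) : M ∈ Sset θ := by
  refine ⟨hM.1, ?_⟩
  suffices H : ∀ a b : L, θ a b → a ∈ M → b ∈ M by
    exact fun a b hab => ⟨H a b hab, H b a (hθ.1.symm hab)⟩
  intro a b hab haM
  by_contra hbM
  have h1 : θ (a ⊓ pc b) (b ⊓ pc b) := hθ.2.1 a b (pc b) (pc b) hab (hθ.1.refl _)
  rw [inf_pc b] at h1
  have h2 : θ (pc (a ⊓ pc b)) (pc ⊥) := hθ.2.2.2.2 _ _ h1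
  rw [pc_bot] at h2
  have h3 : pc (a ⊓ pc b) ∈ P := (hP.2 _ _ h2).mpr (pf_top_mem hP.1)
  have h4 : a ⊓ pc b ∈ M := hM.1.2.2.2.1 a (pc b) haM (maximal_pc_mem hM hbM)
  have h5 : (⊥ : L) ∈ M := inf_pc (a ⊓ pc b) ▸ hM.1.2.2.2.1 _ _ h4 (hPM h3)
  exact pf_bot_not_mem hM.1 h5

lemma step_lcov {θ : L → L → Prop} (hθ : IsCongruence θ) {p : L} (hp : SupIrred p)
    (hP : Set.Ici p ∉ Sset θ) : θ p (lcov p) := by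
  have h0 : ¬ ∀ a b : L, θ a b → (a ∈ Set.Ici p ↔ b ∈ Set.Ici p) :=
    fun h => hP ⟨isPrimeFilter_Ici hp, h⟩
  push_neg at h0
  obtain ⟨a, b, hab, hne⟩ := h0
  have key : ∀ a b : L, θ a b → p ≤ a → ¬ p ≤ b → θ p (lcov p) := by
    intro a b hab hpa hpb
    have h1 : θ (p ⊓ a) (p ⊓ b) := hθ.2.1 p p a b (hθ.1.refl p) hab
    rw [inf_eq_left.mpr hpa] at h1
    have hlt : p ⊓ b ≤ lcov p :=
      le_lcov (lt_of_le_of_ne inf_le_left (fun he => hpb (he ▸ inf_le_right)))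
    have h2 : θ (p ⊔ lcov p) ((p ⊓ b) ⊔ lcov p) :=
      hθ.2.2.1 p (p ⊓ b) (lcov p) (lcov p) h1 (hθ.1.refl _)
    rwa [sup_eq_left.mpr lcov_le, sup_eq_right.mpr hlt] at h2
  simp only [Set.mem_Ici] at hne
  rcases hne with ⟨hpa, hpb⟩ | ⟨hpa, hpb⟩
  · exact key a b hab hpa hpb
  · exact key b a (hθ.1.symm hab) hpb hpa

lemma theta_Sset_le_aux {θ : L → L → Prop} (hθ : IsCongruence θ) :
    ∀ n : ℕ, ∀ x y : L, x ≤ y →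
      {q : L | SupIrred q ∧ q ≤ y ∧ ¬ q ≤ x}.ncard ≤ n →
      theta (Sset θ) x y → θ x y := by
  intro n
  induction n with
  | zero =>
    intro x y hxy hcard _
    have h0 : {q : L | SupIrred q ∧ q ≤ y ∧ ¬ q ≤ x}.ncard = 0 := Nat.le_zero.mp hcard
    rw [Set.ncard_eq_zero (Set.toFinite _)] at h0
    have hyx : y ≤ x := by
      refine le_of_supIrred_le fun q hq hqy => ?_
      by_contra hqx
      have : q ∈ {q : L | SupIrred q ∧ q ≤ y ∧ ¬ q ≤ x} := ⟨hq, hqy, hqx⟩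
      rw [h0] at this
      exact this
    have hxy' : x = y := le_antisymm hxy hyx
    rw [hxy']
    exact hθ.1.refl y
  | succ n ih =>
    intro x y hxy hcard hagree
    by_cases hDe : {q : L | SupIrred q ∧ q ≤ y ∧ ¬ q ≤ x} = ∅
    · refine ih x y hxy ?_ hagree
      rw [hDe, Set.ncard_empty]
      exact Nat.zero_le n
    · obtain ⟨p, hpD, hpmin⟩ := Set.Finite.exists_minimalFor id
        {q : L | SupIrred q ∧ q ≤ y ∧ ¬ q ≤ x} (Set.toFinite _)
        (Set.nonempty_iff_ne_empty.mpr hDe)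
      obtain ⟨hp, hpy, hpx⟩ := hpD
      have hnotin : Set.Ici p ∉ Sset θ := by
        intro hmem
        exact hpx ((hagree _ hmem).mpr hpy)
      have hstep : θ p (lcov p) := step_lcov hθ hp hnotin
      have hlx : lcov p ≤ x := by
        refine le_of_supIrred_le fun q hq hql => ?_
        by_contra hqx
        have hqp : q < p := lt_of_le_of_lt hql (lcov_lt hp)
        have hqD : q ∈ {q : L | SupIrred q ∧ q ≤ y ∧ ¬ q ≤ x} := ⟨hq, hqp.le.trans hpy, hqx⟩
        exact lt_irrefl q (lt_of_lt_of_le hqp (hpmin hqD hqp.le))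
      have hxx' : θ x (x ⊔ p) := by
        have h1 : θ (x ⊔ lcov p) (x ⊔ p) :=
          hθ.2.2.1 x x (lcov p) p (hθ.1.refl x) (hθ.1.symm hstep)
        rwa [sup_eq_left.mpr hlx] at h1
      have hx'y : x ⊔ p ≤ y := sup_le hxy hpy
      have hcard' : {q : L | SupIrred q ∧ q ≤ y ∧ ¬ q ≤ x ⊔ p}.ncard ≤ n := by
        have hsub : {q : L | SupIrred q ∧ q ≤ y ∧ ¬ q ≤ x ⊔ p} ⊂
            {q : L | SupIrred q ∧ q ≤ y ∧ ¬ q ≤ x} := by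
          constructor
          · rintro q ⟨hq, hqy, hqx'⟩
            exact ⟨hq, hqy, fun h => hqx' (h.trans le_sup_left)⟩
          · intro hsup
            exact (hsup ⟨hp, hpy, hpx⟩).2.2 le_sup_right
        have := Set.ncard_lt_ncard hsub (Set.toFinite _)
        omega
      have hagree' : theta (Sset θ) (x ⊔ p) y := by
        intro P hP
        constructor
        · intro h
          rcases (pf_sup_mem_iff hP.1).mp h with h' | h'
          · exact (hagree P hP).mp h'
          · exact hP.1.2.2.1 p y h' hpy
        · intro h
          exact hP.1.2.2.1 x _ ((hagree P hP).mpr h) le_sup_left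
      exact hθ.1.trans hxx' (ih (x ⊔ p) y hx'y hcard' hagree')

lemma theta_Sset_le {θ : L → L → Prop} (hθ : IsCongruence θ) {a b : L}
    (h : theta (Sset θ) a b) : θ a b := by
  have key : ∀ x y : L, x ≤ y → theta (Sset θ) x y → θ x y := fun x y hxy hag =>
    theta_Sset_le_aux hθ _ x y hxy le_rfl hag
  have h1 : theta (Sset θ) a (a ⊔ b) := by
    intro P hP
    rw [pf_sup_mem_iff hP.1]
    exact ⟨Or.inl, fun h' => h'.elim id fun hb => (h P hP).mpr hb⟩
  have h2 : theta (Sset θ) b (a ⊔ b) := by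
    intro P hP
    rw [pf_sup_mem_iff hP.1]
    exact ⟨Or.inr, fun h' => h'.elim (fun ha => (h P hP).symm.mpr ha) id⟩
  exact hθ.1.trans (key a _ le_sup_left h1) (hθ.1.symm (key b _ le_sup_right h2))

lemma theta_ne_eq {A : Set (Set L)} {P : Set L} (hP : IsPrimeFilter P) (hPA : P ∉ A)
    (hA : ∀ Q ∈ A, IsPrimeFilter Q) : theta A ≠ (fun a b : L => a = b) := by
  obtain ⟨p, hp, hrep⟩ := exists_rep hP
  subst hrep
  have hag : theta A p (lcov p) := fun Q hQ => agree_ne_rep (hA Q hQ) hp (fun h => hPA (h ▸ hQ))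
  intro he
  rw [he] at hag
  exact (lcov_lt hp).ne' hag

lemma exists_pair {μ : L → L → Prop} (hμ : IsCongruence μ)
    (hne : μ ≠ (fun a b : L => a = b)) : ∃ a b : L, μ a b ∧ a ≠ b := by
  by_contra h
  push_neg at h
  apply hne
  funext a b
  apply propext
  exact ⟨fun hab => h a b hab, fun he => he ▸ hμ.1.refl a⟩

end PMAux

namespace PMAux
open PMAlgebra

set_option linter.unusedSectionVars false
set_option linter.unusedVariables false

variable {L : Type*} [PMAlgebra L] [Finite L]

lemma cc (hcon : PhiConnected L) {T : Set (Set L)} (hsub : ∀ P ∈ T, IsPrimeFilter P)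
    (hne : T.Nonempty) (hinv : ∀ P ∈ T, phi P ∈ T)
    (hdown : ∀ M ∈ T, IsMaximalPF M → ∀ Q : Set L, IsPrimeFilter Q → Q ⊆ M → Q ∈ T)
    (hbody : ∀ P ∈ T, P ∉ body L) : T = {P : Set L | IsPrimeFilter P} := by
  have hext : ∀ P ∈ T, IsMaximalPF P ∨ IsMinimalPF P := by
    intro P hP
    by_contra h
    push_neg at h
    exact hbody P hP ⟨hsub P hP, h.1, h.2⟩
  refine hcon T (fun P hP => hsub P hP) hne ?_ ?_ hinv
  · intro P Q hP hQ hPQ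
    rcases hext P hP with hm | hm
    · rw [hm.2 Q hQ hPQ]; exact hP
    · have h1 : phi P ∈ T := hinv P hP
      have h2 : IsMaximalPF (phi P) := phi_maximal hm
      have h3 : phi Q ⊆ phi P := phi_anti hPQ
      have h4 : phi Q ∈ T := hdown (phi P) h1 h2 (phi Q) (phi_isPrimeFilter hQ) h3
      have h5 := hinv (phi Q) h4
      rwa [phi_phi] at h5
  · intro P Q hP hQ hQP
    rcases hext P hP with hm | hm
    · exact hdown P hP hm Q hQ hQP
    · rw [hm.2 Q hQ hQP]; exact hP

end PMAux


/-- A finite nontrivial pm-algebra is subdirectly irreducible iff its prime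
filter space is φ-connected and its body has fewer than two elements or is of
the form `{P, φ(P)}` with `φ(P) ≠ P`. -/
theorem finite_subdirectlyIrreducible_iff {L : Type*} [PMAlgebra L] [Finite L]
    (hnt : (⊥ : L) ≠ ⊤) :
    SubdirectlyIrreducible L ↔
      (PhiConnected L ∧ ((body L).encard < 2 ∨
        ∃ P : Set L, IsPrimeFilter P ∧ phi P ≠ P ∧ body L = {P, phi P})) := by
  classical
  constructor
  · rintro ⟨μ, hμc, hμne, hμle⟩
    obtain ⟨a0, b0, hab0, hne0⟩ := PMAux.exists_pair hμc hμne
    have contra : ∀ A B : Set (Set L),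
        IsCongruence (PMAux.theta A) → IsCongruence (PMAux.theta B) →
        PMAux.theta A ≠ (fun a b : L => a = b) → PMAux.theta B ≠ (fun a b : L => a = b) →
        (∀ R : Set L, IsPrimeFilter R → R ∈ A ∨ R ∈ B) → False := by
      intro A B hAc hBc hAne hBne hcov
      obtain ⟨P, hP, hPne⟩ := PMAux.exists_separating hne0
      rcases hcov P hP with h | h
      · exact hPne (hμle (PMAux.theta A) hAc hAne a0 b0 hab0 P h)
      · exact hPne (hμle (PMAux.theta B) hBc hBne a0 b0 hab0 P h)
    constructor
    · -- φ-connectedness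
      intro S hSsub hSne hSinc hSdec hSinv
      by_contra hSne'
      have hcompne : ∃ R : Set L, IsPrimeFilter R ∧ R ∉ S := by
        by_contra h
        push_neg at h
        exact hSne' (Set.Subset.antisymm hSsub (fun R hR => h R hR))
      obtain ⟨R, hR, hRS⟩ := hcompne
      obtain ⟨P0, hP0⟩ := hSne
      have hP0p : IsPrimeFilter P0 := hSsub hP0
      refine contra {Q : Set L | IsPrimeFilter Q ∧ Q ∉ S} S ?_ ?_ ?_ ?_ ?_
      · refine PMAux.theta_isCongruence (fun P hP => hP.1) ?_ ?_
        · intro P hP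
          refine ⟨PMAux.phi_isPrimeFilter hP.1, fun hc => hP.2 ?_⟩
          have h1 := hSinv _ hc
          rwa [PMAux.phi_phi] at h1
        · intro P hP M hM hPM
          exact ⟨hM.1, fun hc => hP.2 (hSdec M P hc hP.1 hPM)⟩
      · refine PMAux.theta_isCongruence (fun P hP => hSsub hP) hSinv ?_
        intro P hP M hM hPM
        exact hSinc P M hP hM.1 hPM
      · exact PMAux.theta_ne_eq hP0p (fun hc => hc.2 hP0) (fun Q hQ => hQ.1)
      · exact PMAux.theta_ne_eq hR hRS (fun Q hQ => hSsub hQ)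
      · intro Q hQ
        by_cases h : Q ∈ S
        · exact Or.inr h
        · exact Or.inl ⟨hQ, h⟩
    · -- body condition
      by_cases h2 : 1 < (body L).encard
      · right
        obtain ⟨P, Q, hPb, hQb, hPQ⟩ := Set.one_lt_encard_iff.mp h2
        have hpair : ∀ R1, R1 ∈ body L → ∀ R2, R2 ∈ body L → R2 = R1 ∨ R2 = phi R1 := by
          intro R1 hR1 R2 hR2
          by_contra hcon2
          push_neg at hcon2
          obtain ⟨hne1, hne2⟩ := hcon2
          have hAcond : ∀ R' : Set L, R' ∈ body L →
              (∀ P' ∈ {Q' : Set L | IsPrimeFilter Q' ∧ Q' ≠ R' ∧ Q' ≠ phi R'},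
                IsPrimeFilter P') ∧
              IsCongruence (PMAux.theta {Q' : Set L | IsPrimeFilter Q' ∧ Q' ≠ R' ∧ Q' ≠ phi R'}) := by
            intro R' hR'
            have hφR' : phi R' ∈ body L := PMAux.phi_mem_body hR'
            refine ⟨fun P' hP' => hP'.1, PMAux.theta_isCongruence (fun P' hP' => hP'.1) ?_ ?_⟩
            · intro P' hP'
              refine ⟨PMAux.phi_isPrimeFilter hP'.1, fun h => hP'.2.2 ?_, fun h => hP'.2.1 ?_⟩
              · rw [← PMAux.phi_phi P', h]
              · rw [← PMAux.phi_phi P', h, PMAux.phi_phi]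
            · intro P' hP' M hM hPM
              exact ⟨hM.1, fun h => hR'.2.1 (h ▸ hM), fun h => hφR'.2.1 (h ▸ hM)⟩
          refine contra {Q' : Set L | IsPrimeFilter Q' ∧ Q' ≠ R1 ∧ Q' ≠ phi R1}
            {Q' : Set L | IsPrimeFilter Q' ∧ Q' ≠ R2 ∧ Q' ≠ phi R2}
            (hAcond R1 hR1).2 (hAcond R2 hR2).2 ?_ ?_ ?_
          · exact PMAux.theta_ne_eq hR1.1 (fun hc => hc.2.1 rfl) (hAcond R1 hR1).1
          · exact PMAux.theta_ne_eq hR2.1 (fun hc => hc.2.1 rfl) (hAcond R2 hR2).1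
          · intro R hRp
            by_cases hc1 : R ≠ R1 ∧ R ≠ phi R1
            · exact Or.inl ⟨hRp, hc1.1, hc1.2⟩
            · refine Or.inr ⟨hRp, ?_, ?_⟩
              · push_neg at hc1
                intro h
                by_cases he : R = R1
                · exact hne1 (he ▸ h).symm
                · have h2' : R = phi R1 := hc1 he
                  apply hne2
                  rw [← h, h2']
              · push_neg at hc1
                intro h
                by_cases he : R = R1
                · apply hne2
                  rw [← he, h, PMAux.phi_phi]
                · have h2' : R = phi R1 := hc1 he
                  apply hne1
                  have := h2' ▸ h
                  rw [← PMAux.phi_phi R1, this, PMAux.phi_phi]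
        refine ⟨P, hPb.1, ?_, ?_⟩
        · intro hfix
          rcases hpair P hPb Q hQb with h | h
          · exact hPQ h.symm
          · exact hPQ (by rw [h, hfix])
        · ext R
          constructor
          · intro hR
            rcases hpair P hPb R hR with h | h
            · exact Set.mem_insert_iff.mpr (Or.inl h)
            · exact Set.mem_insert_iff.mpr (Or.inr (Set.mem_singleton_iff.mpr h))
          · intro hR
            rcases Set.mem_insert_iff.mp hR with h | h
            · exact h ▸ hPb
            · rw [Set.mem_singleton_iff] at h
              exact h ▸ PMAux.phi_mem_body hPb
      · left
        have h1 : (body L).encard ≤ 1 := not_lt.mp h2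
        have h12 : (1 : ℕ∞) < 2 := by exact_mod_cast Nat.one_lt_two
        exact lt_of_le_of_lt h1 h12
  · rintro ⟨hcon, hbody⟩
    have hbody' : (body L = ∅) ∨ (∃ P : Set L, P ∈ body L ∧ body L ⊆ {P, phi P}) := by
      rcases hbody with h | ⟨P, hP, hnefix, heq⟩
      · have hss : (body L).Subsingleton := by
          intro a ha b hb
          by_contra hne
          have : 1 < (body L).encard := Set.one_lt_encard_iff.mpr ⟨a, b, ha, hb, hne⟩
          have h2le : (2 : ℕ∞) ≤ (body L).encard := by
            have := (ENat.add_one_le_iff (n := (body L).encard) (by simp : (1:ℕ∞) ≠ ⊤)).mpr this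
            simpa [one_add_one_eq_two] using this
          exact absurd h (not_lt.mpr h2le)
        rcases hss.eq_empty_or_singleton with h0 | ⟨P, hPs⟩
        · exact Or.inl h0
        · refine Or.inr ⟨P, ?_, ?_⟩
          · rw [hPs]; exact rfl
          · rw [hPs]; exact fun x hx => Set.mem_insert_iff.mpr (Or.inl hx)
      · exact Or.inr ⟨P, by rw [heq]; exact Set.mem_insert _ _, heq ▸ subset_rfl⟩
    have hT : ∀ θ : L → L → Prop, IsCongruence θ → θ ≠ (fun a b : L => a = b) →
        (∀ R ∈ {R : Set L | IsPrimeFilter R ∧ R ∉ PMAux.Sset θ}, R ∉ body L) →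
        {R : Set L | IsPrimeFilter R ∧ R ∉ PMAux.Sset θ} = {P : Set L | IsPrimeFilter P} := by
      intro θ hθ hθne hb
      refine PMAux.cc hcon (fun P hP => hP.1) ?_ ?_ ?_ hb
      · obtain ⟨a, b, hab, hne⟩ := PMAux.exists_pair hθ hθne
        obtain ⟨P, hP, hPdis⟩ := PMAux.exists_separating hne
        exact ⟨P, hP, fun hc => hPdis (hc.2 a b hab)⟩
      · intro P hP
        refine ⟨PMAux.phi_isPrimeFilter hP.1, fun hc => hP.2 ?_⟩
        have h1 := PMAux.Sset_phi hθ hc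
        rwa [PMAux.phi_phi] at h1
      · intro M hM hMmax Q hQ hQM
        exact ⟨hQ, fun hc => hM.2 (PMAux.Sset_max hθ hc hMmax hQM)⟩
    rcases hbody' with hb0 | ⟨P, hPb, hPsub⟩
    · refine ⟨fun _ _ => True,
        ⟨⟨fun _ => trivial, fun _ => trivial, fun _ _ => trivial⟩,
          fun _ _ _ _ _ _ => trivial, fun _ _ _ _ _ _ => trivial,
          fun _ _ _ => trivial, fun _ _ _ => trivial⟩, ?_, ?_⟩
      · intro h
        have hc : True = ((⊥ : L) = ⊤) := congrFun (congrFun h ⊥) ⊤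
        exact hnt (cast hc trivial)
      · intro θ hθ hθne a b _
        have hTeq := hT θ hθ hθne (fun R hR hRb => by rw [hb0] at hRb; exact hRb)
        have hSe : PMAux.Sset θ = ∅ := by
          ext Q
          simp only [Set.mem_empty_iff_false, iff_false]
          intro hQ
          have hQT : Q ∈ {R : Set L | IsPrimeFilter R ∧ R ∉ PMAux.Sset θ} := by
            rw [hTeq]; exact hQ.1
          exact hQT.2 hQ
        refine PMAux.theta_Sset_le hθ ?_
        intro Q hQ
        rw [hSe] at hQ
        exact absurd hQ (Set.notMem_empty Q)
    · have hPp : IsPrimeFilter P := hPb.1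
      have hφPb : phi P ∈ body L := PMAux.phi_mem_body hPb
      have hAc : IsCongruence (PMAux.theta {Q : Set L | IsPrimeFilter Q ∧ Q ≠ P ∧ Q ≠ phi P}) := by
        refine PMAux.theta_isCongruence (fun Q hQ => hQ.1) ?_ ?_
        · intro Q hQ
          refine ⟨PMAux.phi_isPrimeFilter hQ.1, fun h => hQ.2.2 ?_, fun h => hQ.2.1 ?_⟩
          · rw [← PMAux.phi_phi Q, h]
          · rw [← PMAux.phi_phi Q, h, PMAux.phi_phi]
        · intro Q hQ M hM hQM
          exact ⟨hM.1, fun h => hPb.2.1 (h ▸ hM), fun h => hφPb.2.1 (h ▸ hM)⟩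
      refine ⟨PMAux.theta {Q : Set L | IsPrimeFilter Q ∧ Q ≠ P ∧ Q ≠ phi P}, hAc, ?_, ?_⟩
      · exact PMAux.theta_ne_eq hPp (fun hc => hc.2.1 rfl) (fun Q hQ => hQ.1)
      · intro θ hθ hθne a b hab
        have hPS : P ∉ PMAux.Sset θ := by
          intro hPS
          have hφPS : phi P ∈ PMAux.Sset θ := PMAux.Sset_phi hθ hPS
          have hTeq := hT θ hθ hθne (fun R hR hRb => by
            rcases Set.mem_insert_iff.mp (hPsub hRb) with h | h
            · exact hR.2 (h ▸ hPS)
            · rw [Set.mem_singleton_iff] at h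
              exact hR.2 (h ▸ hφPS))
          have hPT : P ∈ {R : Set L | IsPrimeFilter R ∧ R ∉ PMAux.Sset θ} := by
            rw [hTeq]; exact hPp
          exact hPT.2 hPS
        have hφPS : phi P ∉ PMAux.Sset θ := by
          intro hc
          have h1 := PMAux.Sset_phi hθ hc
          rw [PMAux.phi_phi] at h1
          exact hPS h1
        refine PMAux.theta_Sset_le hθ ?_
        intro Q hQ
        exact hab Q ⟨hQ.1, fun h => hPS (h ▸ hQ), fun h => hφPS (h ▸ hQ)⟩
end

section
/- Let L be a subdirectly irreducible pk-algebra, let a ∈ L, and let Q be a prime filter of L with a ∧ a' ∈ Q. Then Q is a maximal prime filter, or Q belongs to Body(L) and φ(Q) ⊆ Q. -/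
open PMAlgebra

section Aux
variable {L : Type*} [PMAlgebra L]

private lemma dm_antitone' {a b : L} (h : a ≤ b) : dm b ≤ (dm a : L) := by
  have : a ⊓ b = a := inf_eq_left.mpr h
  have h2 : dm a = dm b ⊔ dm a := by
    conv_lhs => rw [← this, dm_inf]
    rw [sup_comm]
  rw [h2]; exact le_sup_left

private lemma dm_top' : (dm ⊤ : L) = ⊥ := by
  have h1 : (dm ⊤ : L) ≤ dm (dm ⊥) := dm_antitone' (le_top)
  rw [dm_dm] at h1
  exact le_bot_iff.mp h1

private lemma dm_sup' (a b : L) : dm (a ⊔ b) = dm a ⊓ dm b := by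
  have := dm_inf (dm a) (dm b)
  rw [dm_dm, dm_dm] at this
  rw [← this, dm_dm]

private lemma top_mem' {Q : Set L} (hQ : IsPrimeFilter Q) : (⊤ : L) ∈ Q := by
  obtain ⟨⟨x, hx⟩, _, hup, _, _⟩ := hQ
  exact hup x ⊤ hx le_top

private lemma bot_nmem' {Q : Set L} (hQ : IsPrimeFilter Q) : (⊥ : L) ∉ Q := by
  intro h
  obtain ⟨_, hne, hup, _, _⟩ := hQ
  exact hne (Set.eq_univ_of_forall fun x => hup ⊥ x h bot_le)

private lemma phi_prime' {Q : Set L} (hQ : IsPrimeFilter Q) : IsPrimeFilter (phi Q) := by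
  obtain ⟨hne0, hne, hup, hinf, hprime⟩ := hQ
  refine ⟨⟨⊤, ?_⟩, ?_, ?_, ?_, ?_⟩
  · show dm ⊤ ∉ Q
    rw [dm_top']; exact bot_nmem' ⟨hne0, hne, hup, hinf, hprime⟩
  · intro h
    have : (⊥ : L) ∈ phi Q := h ▸ Set.mem_univ _
    have : dm (⊥ : L) ∉ Q := this
    rw [show (dm ⊥ : L) = ⊤ by rw [← dm_top', dm_dm]] at this
    exact this (top_mem' ⟨hne0, hne, hup, hinf, hprime⟩)
  · intro x y hx hxy h
    exact hx (hup _ _ h (dm_antitone' hxy))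
  · intro x y hx hy h
    rw [dm_inf] at h
    rcases hprime _ _ h with h' | h'
    exacts [hx h', hy h']
  · intro x y hxy
    by_contra hc
    push_neg at hc
    obtain ⟨hx, hy⟩ := hc
    simp only [phi, Set.mem_setOf_eq, not_not] at hx hy
    exact hxy (by rw [dm_sup']; exact hinf _ _ hx hy)

private lemma phi_phi' (Q : Set L) : phi (phi Q) = Q := by
  ext x
  simp only [phi, Set.mem_setOf_eq, not_not, dm_dm]

private lemma phi_anti' {P R : Set L} (h : P ⊆ R) : phi R ⊆ phi P :=
  fun _ hx hm => hx (h hm)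

end Aux


/-- In a subdirectly irreducible pk-algebra, a prime filter containing `a ⊓ a'`
is maximal, or lies in the body with `φ(Q) ⊆ Q`. -/
theorem mem_max_or_body_of_inf_dm_mem {L : Type*} [PMAlgebra L]
    (hk : Kleene L) (hsi : SubdirectlyIrreducible L)
    (a : L) (Q : Set L) (hQ : IsPrimeFilter Q) (ha : a ⊓ dm a ∈ Q) :
    IsMaximalPF Q ∨ (Q ∈ body L ∧ phi Q ⊆ Q) := by
  -- φ(Q) ⊆ Q from Kleene
  have hphi : phi Q ⊆ Q := by
    intro x hx
    have hle := hk a x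
    have hsup : x ⊔ dm x ∈ Q := hQ.2.2.1 _ _ ha hle
    rcases hQ.2.2.2.2 _ _ hsup with h | h
    · exact h
    · exact absurd h hx
  by_cases hmax : IsMaximalPF Q
  · exact Or.inl hmax
  · refine Or.inr ⟨⟨hQ, hmax, ?_⟩, hphi⟩
    intro hmin
    apply hmax
    have hfix : phi Q = Q := hmin.2 _ (phi_prime' hQ) hphi
    refine ⟨hQ, fun R hR hQR => ?_⟩
    have h1 : phi R ⊆ Q := hfix ▸ phi_anti' hQR
    have h2 : phi R = Q := hmin.2 _ (phi_prime' hR) h1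
    calc R = phi (phi R) := (phi_phi' R).symm
      _ = phi Q := by rw [h2]
      _ = Q := hfix
end
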